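/- One-step error recursion: under the setup where P_t is the true propagation of P_{t-1} through kernel k and P̂_t is the mixture Σ_k ω_k k(·|x^(k)) with weights ω_k = P̂_{t-1}(X^(k)), one has TV(P_t, P̂_t) ≤ TV(P_{t-1}, P̂_{t-1}) + Σ_{k=1}^{K} sup_{x ∈ X^(k)} s(x, x^(k)) · P̂_{t-1}(X^(k)). -/

import Mathlib

open MeasureTheory
open scoped ENNReal NNReal

noncomputable def tv {α : Type*} [MeasurableSpace α] (P Q : Measure α) : ℝ :=
  ⨆ A : {A : Set α // MeasurableSet A}, |(P A.1).toReal - (Q A.1).toReal|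

section helpers
variable {α : Type*} [MeasurableSpace α]

lemma tv_bddAbove (P Q : Measure α) [IsFiniteMeasure P] [IsFiniteMeasure Q] :
    BddAbove (Set.range fun A : {A : Set α // MeasurableSet A} =>
      |(P A.1).toReal - (Q A.1).toReal|) := by
  refine ⟨(P Set.univ).toReal + (Q Set.univ).toReal, ?_⟩
  rintro x ⟨A, rfl⟩
  have h1 : (P A.1).toReal ≤ (P Set.univ).toReal :=
    ENNReal.toReal_mono (measure_ne_top _ _) (measure_mono (Set.subset_univ _))
  have h2 : (Q A.1).toReal ≤ (Q Set.univ).toReal :=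
    ENNReal.toReal_mono (measure_ne_top _ _) (measure_mono (Set.subset_univ _))
  have h3 : 0 ≤ (P A.1).toReal := ENNReal.toReal_nonneg
  have h4 : 0 ≤ (Q A.1).toReal := ENNReal.toReal_nonneg
  rw [abs_sub_le_iff]; constructor <;> linarith

lemma le_tv (P Q : Measure α) [IsFiniteMeasure P] [IsFiniteMeasure Q] {A : Set α}
    (hA : MeasurableSet A) : |(P A).toReal - (Q A).toReal| ≤ tv P Q :=
  le_ciSup (tv_bddAbove P Q) ⟨A, hA⟩

lemma tv_comm (P Q : Measure α) : tv P Q = tv Q P := by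
  unfold tv; congr 1; funext A; exact abs_sub_comm _ _

lemma integrable_of_le_one {μ : Measure α} [IsFiniteMeasure μ] {f : α → ℝ}
    (hfm : Measurable f) (h0 : ∀ x, 0 ≤ f x) (h1 : ∀ x, f x ≤ 1) : Integrable f μ := by
  refine (integrable_const (1 : ℝ)).mono' hfm.aestronglyMeasurable ?_
  exact ae_of_all _ fun x => by rw [Real.norm_eq_abs, abs_of_nonneg (h0 x)]; exact h1 x

lemma integral_sub_le_tv (μ ν : Measure α) [IsFiniteMeasure μ] [IsFiniteMeasure ν]
    {f : α → ℝ} (hfm : Measurable f) (h0 : ∀ x, 0 ≤ f x) (h1 : ∀ x, f x ≤ 1) :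
    (∫ x, f x ∂μ) - ∫ x, f x ∂ν ≤ tv μ ν := by
  obtain ⟨u, hu, hνμ, hμν⟩ := hahn_decomposition (μ := μ) (ν := ν)
  have hint : ∀ (ρ : Measure α) [IsFiniteMeasure ρ], Integrable f ρ := fun ρ _ =>
    integrable_of_le_one hfm h0 h1
  have hres : ν.restrict u ≤ μ.restrict u := by
    refine Measure.le_iff.2 fun t ht => ?_
    rw [Measure.restrict_apply ht, Measure.restrict_apply ht]
    exact hνμ _ (ht.inter hu) Set.inter_subset_right
  have hres' : μ.restrict uᶜ ≤ ν.restrict uᶜ := by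
    refine Measure.le_iff.2 fun t ht => ?_
    rw [Measure.restrict_apply ht, Measure.restrict_apply ht]
    exact hμν _ (ht.inter hu.compl) Set.inter_subset_right
  have hνuμu : ν u ≤ μ u := hνμ u hu subset_rfl
  haveI : IsFiniteMeasure (μ.restrict u - ν.restrict u) :=
    isFiniteMeasure_of_le (μ.restrict u) Measure.sub_le
  have key1 : (∫ x in u, f x ∂μ) - ∫ x in u, f x ∂ν ≤ (μ u).toReal - (ν u).toReal := by
    have hdec : (μ.restrict u - ν.restrict u) + ν.restrict u = μ.restrict u :=
      Measure.sub_add_cancel_of_le hres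
    have h2 : (∫ x in u, f x ∂μ) =
        (∫ x, f x ∂(μ.restrict u - ν.restrict u)) + ∫ x in u, f x ∂ν := by
      conv_lhs => rw [← hdec]
      exact integral_add_measure (hint _) (hint _)
    have h3 : (∫ x, f x ∂(μ.restrict u - ν.restrict u)) ≤
        ((μ.restrict u - ν.restrict u) Set.univ).toReal := by
      calc (∫ x, f x ∂(μ.restrict u - ν.restrict u)) ≤
          ∫ _, (1 : ℝ) ∂(μ.restrict u - ν.restrict u) :=
            integral_mono (hint _) (integrable_const 1) h1
        _ = ((μ.restrict u - ν.restrict u) Set.univ).toReal := by simp; rfl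
    have h4 : (μ.restrict u - ν.restrict u) Set.univ = μ u - ν u := by
      rw [Measure.sub_apply MeasurableSet.univ hres, Measure.restrict_apply_univ,
        Measure.restrict_apply_univ]
    rw [h4] at h3
    have h5 : (μ u - ν u).toReal = (μ u).toReal - (ν u).toReal :=
      ENNReal.toReal_sub_of_le hνuμu (measure_ne_top _ _)
    rw [h5] at h3
    linarith
  have key2 : (∫ x in uᶜ, f x ∂μ) ≤ ∫ x in uᶜ, f x ∂ν :=
    integral_mono_measure hres' (ae_of_all _ h0) (hint _)
  have hsplit : ∀ (ρ : Measure α) [IsFiniteMeasure ρ],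
      (∫ x in u, f x ∂ρ) + ∫ x in uᶜ, f x ∂ρ = ∫ x, f x ∂ρ := fun ρ _ =>
    integral_add_compl hu (hint ρ)
  have htv : (μ u).toReal - (ν u).toReal ≤ tv μ ν :=
    le_trans (le_abs_self _) (le_tv μ ν hu)
  have e1 := hsplit μ
  have e2 := hsplit ν
  linarith

lemma abs_integral_sub_le_tv (μ ν : Measure α) [IsFiniteMeasure μ] [IsFiniteMeasure ν]
    {f : α → ℝ} (hfm : Measurable f) (h0 : ∀ x, 0 ≤ f x) (h1 : ∀ x, f x ≤ 1) :
    |(∫ x, f x ∂μ) - ∫ x, f x ∂ν| ≤ tv μ ν := by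
  rw [abs_sub_le_iff]
  exact ⟨integral_sub_le_tv μ ν hfm h0 h1,
    (tv_comm μ ν) ▸ integral_sub_le_tv ν μ hfm h0 h1⟩

end helpers
theorem tv_one_step_recursion {d K : ℕ}
    (k : (Fin d → ℝ) → (Fin d → ℝ) → ℝ)
    (hk_meas : Measurable (Function.uncurry k))
    (hk_nonneg : ∀ x y, 0 ≤ k x y)
    (hk_prob : ∀ x, ∫ y, k x y = 1)
    -- partition with representative points
    (X : Fin K → Set (Fin d → ℝ))
    (hX_meas : ∀ j, MeasurableSet (X j))
    (hX_disj : Pairwise (Function.onFun Disjoint X))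
    (hX_cover : (⋃ j, X j) = Set.univ)
    (xr : Fin K → (Fin d → ℝ)) (hxr : ∀ j, xr j ∈ X j)
    -- true density at time t-1 and its propagation to time t
    (pPrev pNext : (Fin d → ℝ) → ℝ)
    (hp_meas : Measurable pPrev) (hp_nonneg : ∀ x, 0 ≤ pPrev x)
    (hp_int : ∫ x, pPrev x = 1)
    (hpNext : ∀ y, pNext y = ∫ x, k x y * pPrev x)
    (Pprev Pnext : Measure (Fin d → ℝ))
    (hPprev : Pprev = volume.withDensity (fun x => ENNReal.ofReal (pPrev x)))
    (hPnext : Pnext = volume.withDensity (fun y => ENNReal.ofReal (pNext y)))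
    -- approximating measure at time t-1 and the mixture at time t
    (PhatPrev PhatNext : Measure (Fin d → ℝ)) [IsProbabilityMeasure PhatPrev]
    (hPhatNext : PhatNext =
      ∑ j, PhatPrev (X j) • volume.withDensity (fun y => ENNReal.ofReal (k (xr j) y)))
    -- the kernel total-variation function s
    (s : (Fin d → ℝ) → (Fin d → ℝ) → ℝ)
    (hs : ∀ x x', s x x' = (1 / 2) * ∫ y, |k x y - k x' y|) :
    tv Pnext PhatNext ≤
      tv Pprev PhatPrev +
        ∑ j, (⨆ x ∈ X j, s x (xr j)) * (PhatPrev (X j)).toReal := by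
  classical
  -- basic facts about the kernel
  have hk_x_meas : ∀ x, Measurable (k x) := fun x => hk_meas.of_uncurry_left
  have hk_int : ∀ x, Integrable (k x) := by
    intro x; by_contra h
    have := hk_prob x
    rw [integral_undef h] at this; norm_num at this
  have hp_intg : Integrable pPrev := by
    by_contra h; have := hp_int; rw [integral_undef h] at this; norm_num at this
  have hk_lint : ∀ x, ∫⁻ y, ENNReal.ofReal (k x y) = 1 := fun x => by
    rw [← ofReal_integral_eq_lintegral_ofReal (hk_int x) (ae_of_all _ (hk_nonneg x)),
      hk_prob x, ENNReal.ofReal_one]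
  have hp_lint : ∫⁻ x, ENNReal.ofReal (pPrev x) = 1 := by
    rw [← ofReal_integral_eq_lintegral_ofReal hp_intg (ae_of_all _ hp_nonneg),
      hp_int, ENNReal.ofReal_one]
  haveI : IsProbabilityMeasure Pprev :=
    ⟨by rw [hPprev, withDensity_apply _ MeasurableSet.univ, setLIntegral_univ, hp_lint]⟩
  -- the function g A x = K(A | x)
  set g : Set (Fin d → ℝ) → (Fin d → ℝ) → ℝ := fun A x => ∫ y in A, k x y with hgdef
  have g_nonneg : ∀ A x, 0 ≤ g A x := fun A x =>
    integral_nonneg fun y => hk_nonneg x y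
  have g_le_one : ∀ A x, g A x ≤ 1 := fun A x =>
    le_of_le_of_eq (setIntegral_le_integral (hk_int x) (ae_of_all _ (hk_nonneg x))) (hk_prob x)
  have g_meas : ∀ A, Measurable (g A) := by
    intro A
    have h : StronglyMeasurable fun x => ∫ y, (Function.uncurry k) (x, y) ∂(volume.restrict A) :=
      hk_meas.stronglyMeasurable.integral_prod_right'
    exact h.measurable
  have g_lint : ∀ (x) {A : Set (Fin d → ℝ)}, MeasurableSet A →
      ∫⁻ y in A, ENNReal.ofReal (k x y) = ENNReal.ofReal (g A x) := fun x A hA =>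
    (ofReal_integral_eq_lintegral_ofReal ((hk_int x).integrableOn)
      (ae_of_all _ fun y => hk_nonneg x y)).symm
  -- facts about s
  have s_nonneg : ∀ x x', 0 ≤ s x x' := fun x x' => by
    rw [hs]
    have h : (0:ℝ) ≤ ∫ y, |k x y - k x' y| := integral_nonneg fun y => abs_nonneg _
    linarith
  have habs_int : ∀ x x', Integrable (fun y => |k x y - k x' y|) := fun x x' =>
    ((hk_int x).sub (hk_int x')).abs
  have s_le_one : ∀ x x', s x x' ≤ 1 := fun x x' => by
    rw [hs]
    have h2 : (∫ y, |k x y - k x' y|) ≤ ∫ y, (k x y + k x' y) := by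
      refine integral_mono (habs_int x x') ((hk_int x).add (hk_int x')) fun y => ?_
      have h1 := hk_nonneg x y; have h2 := hk_nonneg x' y
      rw [abs_sub_le_iff]; constructor <;> linarith
    have h3 : (∫ y, (k x y + k x' y)) = 2 := by
      rw [integral_add (hk_int x) (hk_int x'), hk_prob, hk_prob]; norm_num
    linarith
  -- pointwise TV bound for the kernel
  have hgs : ∀ {A : Set (Fin d → ℝ)}, MeasurableSet A → ∀ x x',
      |g A x - g A x'| ≤ s x x' := by
    intro A hA x x'
    have hd_int : Integrable (fun y => k x y - k x' y) := (hk_int x).sub (hk_int x')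
    have hd0 : (∫ y, (k x y - k x' y)) = 0 := by
      rw [integral_sub (hk_int x) (hk_int x'), hk_prob, hk_prob]; ring
    have hsplit : (∫ y in A, (k x y - k x' y)) + ∫ y in Aᶜ, (k x y - k x' y) = 0 := by
      rw [integral_add_compl hA hd_int, hd0]
    have habs_split : (∫ y in A, |k x y - k x' y|) + ∫ y in Aᶜ, |k x y - k x' y|
        = ∫ y, |k x y - k x' y| := integral_add_compl hA hd_int.abs
    have hA1 : |∫ y in A, (k x y - k x' y)| ≤ ∫ y in A, |k x y - k x' y| := by
      rw [← Real.norm_eq_abs]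
      refine (norm_integral_le_integral_norm _).trans_eq ?_
      simp [Real.norm_eq_abs]
    have hA2 : |∫ y in Aᶜ, (k x y - k x' y)| ≤ ∫ y in Aᶜ, |k x y - k x' y| := by
      rw [← Real.norm_eq_abs]
      refine (norm_integral_le_integral_norm _).trans_eq ?_
      simp [Real.norm_eq_abs]
    have hgd : g A x - g A x' = ∫ y in A, (k x y - k x' y) :=
      (integral_sub ((hk_int x).integrableOn) ((hk_int x').integrableOn)).symm
    have heq : |∫ y in A, (k x y - k x' y)| = |∫ y in Aᶜ, (k x y - k x' y)| := by
      have h : (∫ y in Aᶜ, (k x y - k x' y)) = -(∫ y in A, (k x y - k x' y)) := by linarith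
      rw [h, abs_neg]
    rw [hs, hgd]
    have h1 := abs_nonneg (∫ y in A, (k x y - k x' y))
    linarith [hA1, hA2, heq, habs_split]
  -- the suprema S j
  set S : Fin K → ℝ := fun j => ⨆ x ∈ X j, s x (xr j) with hSdef
  have hS_mem : ∀ j x, x ∈ X j → s x (xr j) ≤ S j := by
    intro j x hx
    have hb : BddAbove (Set.range fun x => ⨆ _ : x ∈ X j, s x (xr j)) := by
      refine ⟨1, ?_⟩; rintro _ ⟨x', rfl⟩
      exact Real.iSup_le (fun _ => s_le_one x' (xr j)) one_pos.le
    calc s x (xr j) = ⨆ _ : x ∈ X j, s x (xr j) := (ciSup_pos (f := fun _ => s x (xr j)) hx).symm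
      _ ≤ S j := le_ciSup hb x
  have hS_nonneg : ∀ j, 0 ≤ S j := fun j => by
    have h0 : s (xr j) (xr j) = 0 := by rw [hs]; simp
    have := hS_mem j (xr j) (hxr j)
    linarith
  -- identification of Pnext
  set Fp : ((Fin d → ℝ) × (Fin d → ℝ)) → ℝ≥0∞ :=
    fun p => ENNReal.ofReal (k p.1 p.2) * ENNReal.ofReal (pPrev p.1) with hFpdef
  have hFp_meas : Measurable Fp :=
    (hk_meas.ennreal_ofReal).mul ((hp_meas.comp measurable_fst).ennreal_ofReal)
  have hinner : ∀ (x) {A : Set (Fin d → ℝ)}, MeasurableSet A →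
      ∫⁻ y in A, Fp (x, y) = ENNReal.ofReal (pPrev x * g A x) := by
    intro x A hA
    have h0 : ∫⁻ y in A, Fp (x, y)
        = ∫⁻ y in A, ENNReal.ofReal (k x y) * ENNReal.ofReal (pPrev x) := rfl
    rw [h0, lintegral_mul_const _ ((hk_x_meas x).ennreal_ofReal), g_lint x hA,
      ENNReal.ofReal_mul (hp_nonneg x), mul_comm]
  have htot_inner : ∀ x, ∫⁻ y, Fp (x, y) = ENNReal.ofReal (pPrev x) := by
    intro x
    have h0 : ∫⁻ y, Fp (x, y)
        = ∫⁻ y, ENNReal.ofReal (k x y) * ENNReal.ofReal (pPrev x) := rfl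
    rw [h0, lintegral_mul_const _ ((hk_x_meas x).ennreal_ofReal), hk_lint x, one_mul]
  have htot : ∫⁻ x, ∫⁻ y, Fp (x, y) = 1 := by
    simp_rw [htot_inner]; exact hp_lint
  have hswap_full : ∫⁻ y, ∫⁻ x, Fp (x, y) = 1 := by
    rw [← lintegral_lintegral_swap (f := fun x y => Fp (x, y)) hFp_meas.aemeasurable]
    exact htot
  have hfin_ae : ∀ᵐ y, (∫⁻ x, Fp (x, y)) < ⊤ := by
    refine ae_lt_top hFp_meas.lintegral_prod_left' ?_
    rw [hswap_full]; exact ENNReal.one_ne_top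
  have hae : ∀ᵐ y, ENNReal.ofReal (pNext y) = ∫⁻ x, Fp (x, y) := by
    filter_upwards [hfin_ae] with y hy
    have hmeas_y : Measurable fun x => k x y * pPrev x := hk_meas.of_uncurry_right.mul hp_meas
    have hnn : ∀ x, 0 ≤ k x y * pPrev x := fun x => mul_nonneg (hk_nonneg x y) (hp_nonneg x)
    have hlint_eq : ∫⁻ x, ENNReal.ofReal (k x y * pPrev x) = ∫⁻ x, Fp (x, y) :=
      lintegral_congr fun x => ENNReal.ofReal_mul (hk_nonneg x y)
    rw [hpNext y, integral_eq_lintegral_of_nonneg_ae (ae_of_all _ hnn)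
      hmeas_y.aestronglyMeasurable, hlint_eq]
    exact ENNReal.ofReal_toReal hy.ne
  have hPnextA : ∀ {A : Set (Fin d → ℝ)}, MeasurableSet A →
      Pnext A = ∫⁻ x, ENNReal.ofReal (pPrev x * g A x) := by
    intro A hA
    rw [hPnext, withDensity_apply _ hA]
    calc ∫⁻ y in A, ENNReal.ofReal (pNext y)
        = ∫⁻ y in A, ∫⁻ x, Fp (x, y) := lintegral_congr_ae (ae_restrict_of_ae hae)
      _ = ∫⁻ x, ∫⁻ y in A, Fp (x, y) :=
          lintegral_lintegral_swap (μ := volume.restrict A) (ν := volume)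
            (f := fun y x => Fp (x, y)) (hFp_meas.comp measurable_swap).aemeasurable
      _ = ∫⁻ x, ENNReal.ofReal (pPrev x * g A x) := lintegral_congr fun x => hinner x hA
  have hPnextA' : ∀ {A : Set (Fin d → ℝ)}, MeasurableSet A →
      (Pnext A).toReal = ∫ x, pPrev x * g A x := by
    intro A hA
    rw [hPnextA hA, integral_eq_lintegral_of_nonneg_ae
      (ae_of_all _ fun x => mul_nonneg (hp_nonneg x) (g_nonneg A x))
      (hp_meas.mul (g_meas A)).aestronglyMeasurable]
  have hPprevInt : ∀ {A : Set (Fin d → ℝ)}, MeasurableSet A →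
      ∫ x, g A x ∂Pprev = ∫ x, pPrev x * g A x := by
    intro A hA
    rw [hPprev]
    have h0 : (fun x => ENNReal.ofReal (pPrev x))
        = fun x => (((fun x => (pPrev x).toNNReal) x : ℝ≥0) : ℝ≥0∞) := rfl
    rw [h0, integral_withDensity_eq_integral_smul hp_meas.real_toNNReal (g A)]
    congr 1; funext x
    rw [NNReal.smul_def, smul_eq_mul, Real.coe_toNNReal _ (hp_nonneg x)]
  -- identification of PhatNext
  have hPhatA : ∀ {A : Set (Fin d → ℝ)}, MeasurableSet A →
      (PhatNext A).toReal = ∑ j, (PhatPrev (X j)).toReal * g A (xr j) := by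
    intro A hA
    have hterm : ∀ j, (PhatPrev (X j) • volume.withDensity
        (fun y => ENNReal.ofReal (k (xr j) y))) A
        = PhatPrev (X j) * ENNReal.ofReal (g A (xr j)) := by
      intro j
      rw [Measure.smul_apply, smul_eq_mul, withDensity_apply _ hA, g_lint (xr j) hA]
    rw [hPhatNext, Measure.finset_sum_apply, Finset.sum_congr rfl fun j _ => hterm j,
      ENNReal.toReal_sum fun j _ => ENNReal.mul_ne_top (measure_ne_top _ _) ENNReal.ofReal_ne_top]
    exact Finset.sum_congr rfl fun j _ => by
      rw [ENNReal.toReal_mul, ENNReal.toReal_ofReal (g_nonneg A (xr j))]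
  -- splitting over the partition
  have hg_int_hat : ∀ A, Integrable (g A) PhatPrev := fun A =>
    integrable_of_le_one (g_meas A) (g_nonneg A) (g_le_one A)
  have hsplit_hat : ∀ A : Set (Fin d → ℝ),
      ∫ x, g A x ∂PhatPrev = ∑ j, ∫ x in X j, g A x ∂PhatPrev := by
    intro A
    have h1 : ∫ x in ⋃ j, X j, g A x ∂PhatPrev = ∑' j, ∫ x in X j, g A x ∂PhatPrev :=
      integral_iUnion hX_meas hX_disj (hg_int_hat A).integrableOn
    rw [hX_cover, Measure.restrict_univ] at h1
    rw [h1, tsum_fintype]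
  have hterm_bound : ∀ {A : Set (Fin d → ℝ)}, MeasurableSet A → ∀ j,
      |(∫ x in X j, g A x ∂PhatPrev) - (PhatPrev (X j)).toReal * g A (xr j)|
        ≤ S j * (PhatPrev (X j)).toReal := by
    intro A hA j
    have hconst : ∫ _ in X j, g A (xr j) ∂PhatPrev = (PhatPrev (X j)).toReal * g A (xr j) := by
      rw [setIntegral_const, smul_eq_mul]; rfl
    rw [← hconst, ← integral_sub (hg_int_hat A).integrableOn (integrable_const _).integrableOn]
    calc |∫ x in X j, (g A x - g A (xr j)) ∂PhatPrev|
        ≤ ∫ x in X j, |g A x - g A (xr j)| ∂PhatPrev := by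
          rw [← Real.norm_eq_abs]
          refine (norm_integral_le_integral_norm _).trans_eq ?_
          simp [Real.norm_eq_abs]
      _ ≤ ∫ _ in X j, S j ∂PhatPrev := by
          refine setIntegral_mono_on
            (((hg_int_hat A).sub (integrable_const _)).abs.integrableOn)
            ((integrable_const _).integrableOn) (hX_meas j) fun x hx => ?_
          exact (hgs hA x (xr j)).trans (hS_mem j x hx)
      _ = S j * (PhatPrev (X j)).toReal := by
          rw [setIntegral_const, smul_eq_mul, mul_comm]; rfl
  -- main pointwise bound
  have main : ∀ A : {A : Set (Fin d → ℝ) // MeasurableSet A},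
      |(Pnext A.1).toReal - (PhatNext A.1).toReal|
        ≤ tv Pprev PhatPrev + ∑ j, S j * (PhatPrev (X j)).toReal := by
    rintro ⟨A, hA⟩
    dsimp only
    rw [hPnextA' hA, hPhatA hA, ← hPprevInt hA]
    have h1 : |(∫ x, g A x ∂Pprev) - ∫ x, g A x ∂PhatPrev| ≤ tv Pprev PhatPrev :=
      abs_integral_sub_le_tv _ _ (g_meas A) (g_nonneg A) (g_le_one A)
    have h2 : |(∫ x, g A x ∂PhatPrev) - ∑ j, (PhatPrev (X j)).toReal * g A (xr j)|
        ≤ ∑ j, S j * (PhatPrev (X j)).toReal := by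
      rw [hsplit_hat A, ← Finset.sum_sub_distrib]
      exact (Finset.abs_sum_le_sum_abs _ _).trans
        (Finset.sum_le_sum fun j _ => hterm_bound hA j)
    calc |(∫ x, g A x ∂Pprev) - ∑ j, (PhatPrev (X j)).toReal * g A (xr j)|
        ≤ |(∫ x, g A x ∂Pprev) - ∫ x, g A x ∂PhatPrev|
          + |(∫ x, g A x ∂PhatPrev) - ∑ j, (PhatPrev (X j)).toReal * g A (xr j)| :=
          abs_sub_le _ _ _
      _ ≤ tv Pprev PhatPrev + ∑ j, S j * (PhatPrev (X j)).toReal := add_le_add h1 h2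
  have hnn : 0 ≤ tv Pprev PhatPrev + ∑ j, S j * (PhatPrev (X j)).toReal := by
    have h1 : 0 ≤ tv Pprev PhatPrev := Real.iSup_nonneg fun A => abs_nonneg _
    have h2 : 0 ≤ ∑ j, S j * (PhatPrev (X j)).toReal :=
      Finset.sum_nonneg fun j _ => mul_nonneg (hS_nonneg j) ENNReal.toReal_nonneg
    linarith
  exact Real.iSup_le main hnn
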